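/- Suppose C = (1+2v²)C₁ ⊕ (2v+2v²)C₂ ⊕ (v+2v²)C₃ is a cyclic code of length n over R, where C₁, C₂, C₃ are ternary cyclic codes with generator polynomials f₁, f₂, f₃ respectively (each fᵢ a monic divisor of xⁿ−1 in Z₃[x]). Then, under the polynomial representation of R^n as R[x]/(xⁿ−1), C is the ideal generated by (1+2v²)f₁, (2v+2v²)f₂ and (v+2v²)f₃, and |C| = 3^{3n − (deg f₁ + deg f₂ + deg f₃)}. -/

import Mathlib

/-- The ring `R = Z₃ + vZ₃ + v²Z₃ = Z₃[v]/(v³ - v)`, with elements written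
`a + v*b + v²*c` for `a b c : ZMod 3` (stored as the three coordinates). -/
@[ext]
structure R3 : Type where
  a : ZMod 3
  b : ZMod 3
  c : ZMod 3
  deriving DecidableEq

namespace R3

instance : Zero R3 := ⟨⟨0, 0, 0⟩⟩
instance : One R3 := ⟨⟨1, 0, 0⟩⟩
instance : Add R3 := ⟨fun x y => ⟨x.a + y.a, x.b + y.b, x.c + y.c⟩⟩
instance : Neg R3 := ⟨fun x => ⟨-x.a, -x.b, -x.c⟩⟩
/-- Multiplication induced by `v³ = v` :
`(a+vb+v²c)(a'+vb'+v²c') = aa' + v(ab'+a'b+bc'+b'c) + v²(ac'+a'c+bb'+cc')`. -/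
instance : Mul R3 := ⟨fun x y =>
  ⟨x.a * y.a,
   x.a * y.b + x.b * y.a + x.b * y.c + x.c * y.b,
   x.a * y.c + x.c * y.a + x.b * y.b + x.c * y.c⟩⟩

@[simp] lemma zero_a : (0 : R3).a = 0 := rfl
@[simp] lemma zero_b : (0 : R3).b = 0 := rfl
@[simp] lemma zero_c : (0 : R3).c = 0 := rfl
@[simp] lemma one_a : (1 : R3).a = 1 := rfl
@[simp] lemma one_b : (1 : R3).b = 0 := rfl
@[simp] lemma one_c : (1 : R3).c = 0 := rfl
@[simp] lemma add_a (x y : R3) : (x + y).a = x.a + y.a := rfl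
@[simp] lemma add_b (x y : R3) : (x + y).b = x.b + y.b := rfl
@[simp] lemma add_c (x y : R3) : (x + y).c = x.c + y.c := rfl
@[simp] lemma neg_a (x : R3) : (-x).a = -x.a := rfl
@[simp] lemma neg_b (x : R3) : (-x).b = -x.b := rfl
@[simp] lemma neg_c (x : R3) : (-x).c = -x.c := rfl
@[simp] lemma mul_a (x y : R3) : (x * y).a = x.a * y.a := rfl
@[simp] lemma mul_b (x y : R3) :
    (x * y).b = x.a * y.b + x.b * y.a + x.b * y.c + x.c * y.b := rfl
@[simp] lemma mul_c (x y : R3) :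
    (x * y).c = x.a * y.c + x.c * y.a + x.b * y.b + x.c * y.c := rfl

private lemma thm_add_assoc (x y z : R3) : x + y + z = x + (y + z) := by ext <;> simp <;> ring
private lemma thm_zero_add (x : R3) : 0 + x = x := by ext <;> simp
private lemma thm_add_zero (x : R3) : x + 0 = x := by ext <;> simp
private lemma thm_add_comm (x y : R3) : x + y = y + x := by ext <;> simp <;> ring
private lemma thm_mul_assoc (x y z : R3) : x * y * z = x * (y * z) := by ext <;> simp <;> ring
private lemma thm_one_mul (x : R3) : 1 * x = x := by ext <;> simp
private lemma thm_mul_one (x : R3) : x * 1 = x := by ext <;> simp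
private lemma thm_left_distrib (x y z : R3) : x * (y + z) = x * y + x * z := by ext <;> simp <;> ring
private lemma thm_right_distrib (x y z : R3) : (x + y) * z = x * z + y * z := by ext <;> simp <;> ring
private lemma thm_mul_comm (x y : R3) : x * y = y * x := by ext <;> simp <;> ring
private lemma thm_zero_mul (x : R3) : 0 * x = 0 := by ext <;> simp
private lemma thm_mul_zero (x : R3) : x * 0 = 0 := by ext <;> simp
private lemma thm_neg_add_cancel (x : R3) : -x + x = 0 := by ext <;> simp

instance : CommRing R3 where
  nsmul m x := ⟨m • x.a, m • x.b, m • x.c⟩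
  nsmul_zero x := by
    show (⟨(0:ℕ) • x.a, (0:ℕ) • x.b, (0:ℕ) • x.c⟩ : R3) = 0
    ext <;> simp
  nsmul_succ m x := by
    show (⟨(m+1) • x.a, (m+1) • x.b, (m+1) • x.c⟩ : R3) = ⟨m • x.a, m • x.b, m • x.c⟩ + x
    ext <;> simp <;> ring
  zsmul m x := ⟨m • x.a, m • x.b, m • x.c⟩
  zsmul_zero' x := by
    show (⟨(0:ℤ) • x.a, (0:ℤ) • x.b, (0:ℤ) • x.c⟩ : R3) = 0
    ext <;> simp
  zsmul_succ' m x := by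
    show (⟨(Int.ofNat m.succ) • x.a, (Int.ofNat m.succ) • x.b, (Int.ofNat m.succ) • x.c⟩ : R3)
      = ⟨(Int.ofNat m) • x.a, (Int.ofNat m) • x.b, (Int.ofNat m) • x.c⟩ + x
    ext <;> simp <;> ring
  zsmul_neg' m x := by
    show (⟨(Int.negSucc m) • x.a, (Int.negSucc m) • x.b, (Int.negSucc m) • x.c⟩ : R3)
      = -⟨(Int.ofNat m.succ) • x.a, (Int.ofNat m.succ) • x.b, (Int.ofNat m.succ) • x.c⟩
    ext <;> simp [Int.negSucc_eq] <;> ring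
  add_assoc := thm_add_assoc
  zero_add := thm_zero_add
  add_zero := thm_add_zero
  add_comm := thm_add_comm
  mul_assoc := thm_mul_assoc
  one_mul := thm_one_mul
  mul_one := thm_mul_one
  left_distrib := thm_left_distrib
  right_distrib := thm_right_distrib
  mul_comm := thm_mul_comm
  zero_mul := thm_zero_mul
  mul_zero := thm_mul_zero
  neg_add_cancel := thm_neg_add_cancel

/-- The element `v` of `R = Z₃[v]/(v³-v)`. -/
def v : R3 := ⟨0, 1, 0⟩

/-- The natural inclusion `Z₃ → R`. -/
def iota : ZMod 3 →+* R3 where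
  toFun t := ⟨t, 0, 0⟩
  map_one' := by ext <;> simp
  map_mul' x y := by ext <;> simp
  map_zero' := by ext <;> simp
  map_add' x y := by ext <;> simp

instance : Algebra (ZMod 3) R3 := iota.toAlgebra

end R3

open R3 in
/-- The Gray map `φ : R → Z₃³`, `φ(a+vb+v²c) = (a, a+b+c, a+2b+c)`. -/
def gray (r : R3) : ZMod 3 × ZMod 3 × ZMod 3 :=
  (r.a, r.a + r.b + r.c, r.a + 2 * r.b + r.c)

/-- The Gray map extended blockwise to `φ : R^n → Z₃^{3n}`, where `Z₃^{3n}` is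
identified with `Z₃^n × Z₃^n × Z₃^n` via the three length-`n` blocks. -/
def grayV {n : ℕ} (r : Fin n → R3) :
    (Fin n → ZMod 3) × (Fin n → ZMod 3) × (Fin n → ZMod 3) :=
  (fun i => (r i).a,
   fun i => (r i).a + (r i).b + (r i).c,
   fun i => (r i).a + 2 * (r i).b + (r i).c)

/-- Hamming weight on `Z₃^{3n} = Z₃^n × Z₃^n × Z₃^n`. -/
def wtH {n : ℕ} (x : (Fin n → ZMod 3) × (Fin n → ZMod 3) × (Fin n → ZMod 3)) : ℕ :=
  hammingNorm x.1 + hammingNorm x.2.1 + hammingNorm x.2.2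

/-- The Lee weight of an element of `R`: the Hamming weight of its Gray image. -/
def wtLee (r : R3) : ℕ :=
  (if r.a ≠ 0 then 1 else 0) + (if r.a + r.b + r.c ≠ 0 then 1 else 0) +
    (if r.a + 2 * r.b + r.c ≠ 0 then 1 else 0)

/-- The Lee weight on `R^n`, extended additively. -/
def wtLeeV {n : ℕ} (x : Fin n → R3) : ℕ := ∑ i, wtLee (x i)

/-- The cyclic shift `σ(c₀,…,c_{n-1}) = (c_{n-1},c₀,…,c_{n-2})`. -/
def cyc {α : Type*} {n : ℕ} [NeZero n] (c : Fin n → α) : Fin n → α :=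
  fun i => c (i - 1)

/-- The negacyclic shift `η(c₀,…,c_{n-1}) = (-c_{n-1},c₀,…,c_{n-2})`. -/
def nega {α : Type*} [Neg α] {n : ℕ} [NeZero n] (c : Fin n → α) : Fin n → α :=
  fun i => if i = 0 then -c (i - 1) else c (i - 1)

/-- The `λ`-constacyclic shift `(c₀,…,c_{n-1}) ↦ (λc_{n-1},c₀,…,c_{n-2})`. -/
def consta {α : Type*} [Mul α] {n : ℕ} [NeZero n] (lam : α) (c : Fin n → α) : Fin n → α :=
  fun i => if i = 0 then lam * c (i - 1) else c (i - 1)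

open Fin.NatCast in
/-- The quasi-cyclic shift `τ_{s,l}` of block length `l` on vectors of length `n = s*l`,
moving the last block of `l` coordinates to the front; equivalently, the cyclic shift
by `l` positions. -/
def shiftBy {α : Type*} {n : ℕ} [NeZero n] (l : ℕ) (c : Fin n → α) : Fin n → α :=
  fun i => c (i - (l : Fin n))

/-- Apply a map to each of the three blocks of `Z₃^{3n} = Z₃^n × Z₃^n × Z₃^n`. -/
def blockMap {n : ℕ} (f : (Fin n → ZMod 3) → (Fin n → ZMod 3))
    (x : (Fin n → ZMod 3) × (Fin n → ZMod 3) × (Fin n → ZMod 3)) :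
    (Fin n → ZMod 3) × (Fin n → ZMod 3) × (Fin n → ZMod 3) :=
  (f x.1, f x.2.1, f x.2.2)

/-- The Euclidean dual of a linear code over `R`. -/
def dualR {n : ℕ} (C : Submodule R3 (Fin n → R3)) : Submodule R3 (Fin n → R3) where
  carrier := {x | ∀ y ∈ C, ∑ i, x i * y i = 0}
  add_mem' := by
    intro p q hp hq y hy
    simp only [Set.mem_setOf_eq] at *
    simp [Pi.add_apply, add_mul, Finset.sum_add_distrib, hp y hy, hq y hy]
  zero_mem' := by intro y hy; simp
  smul_mem' := by
    intro r p hp y hy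
    simp only [Set.mem_setOf_eq] at *
    simp [Pi.smul_apply, smul_eq_mul, mul_assoc, ← Finset.mul_sum, hp y hy]

/-- The Euclidean dual of a ternary linear code. -/
def dualZ {n : ℕ} (C : Submodule (ZMod 3) (Fin n → ZMod 3)) :
    Submodule (ZMod 3) (Fin n → ZMod 3) where
  carrier := {x | ∀ y ∈ C, ∑ i, x i * y i = 0}
  add_mem' := by
    intro p q hp hq y hy
    simp only [Set.mem_setOf_eq] at *
    simp [Pi.add_apply, add_mul, Finset.sum_add_distrib, hp y hy, hq y hy]
  zero_mem' := by intro y hy; simp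
  smul_mem' := by
    intro r p hp y hy
    simp only [Set.mem_setOf_eq] at *
    simp [Pi.smul_apply, smul_eq_mul, mul_assoc, ← Finset.mul_sum, hp y hy]

/-- The Euclidean inner product on `Z₃^{3n} = Z₃^n × Z₃^n × Z₃^n`. -/
def inner3 {n : ℕ} (x y : (Fin n → ZMod 3) × (Fin n → ZMod 3) × (Fin n → ZMod 3)) : ZMod 3 :=
  ∑ i, x.1 i * y.1 i + ∑ i, x.2.1 i * y.2.1 i + ∑ i, x.2.2 i * y.2.2 i

/-- The Euclidean dual (as a set) of a subset of `Z₃^{3n}`. -/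
def dual3Set {n : ℕ} (S : Set ((Fin n → ZMod 3) × (Fin n → ZMod 3) × (Fin n → ZMod 3))) :
    Set ((Fin n → ZMod 3) × (Fin n → ZMod 3) × (Fin n → ZMod 3)) :=
  {x | ∀ y ∈ S, inner3 x y = 0}

/-- The first associated ternary code `C₁ = {a : ∃ b c, a+vb+v²c ∈ C}`. -/
def assoc1 {n : ℕ} (C : Set (Fin n → R3)) : Set (Fin n → ZMod 3) :=
  {x | ∃ r ∈ C, ∀ i, x i = (r i).a}

/-- The second associated ternary code `C₂ = {a+b+c : a+vb+v²c ∈ C}`. -/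
def assoc2 {n : ℕ} (C : Set (Fin n → R3)) : Set (Fin n → ZMod 3) :=
  {x | ∃ r ∈ C, ∀ i, x i = (r i).a + (r i).b + (r i).c}

/-- The third associated ternary code `C₃ = {a+2b+c : a+vb+v²c ∈ C}`. -/
def assoc3 {n : ℕ} (C : Set (Fin n → R3)) : Set (Fin n → ZMod 3) :=
  {x | ∃ r ∈ C, ∀ i, x i = (r i).a + 2 * (r i).b + (r i).c}

/-- The idempotent `e₁ = 1 + 2v²` of `R`. -/
noncomputable def e1 : R3 := 1 + 2 * R3.v ^ 2
/-- The idempotent `e₂ = 2v + 2v²` of `R`. -/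
noncomputable def e2 : R3 := 2 * R3.v + 2 * R3.v ^ 2
/-- The idempotent `e₃ = v + 2v²` of `R`. -/
noncomputable def e3 : R3 := R3.v + 2 * R3.v ^ 2

/-- Coordinatewise inclusion `Z₃^n → R^n`. -/
def emb {n : ℕ} (x : Fin n → ZMod 3) : Fin n → R3 := fun i => R3.iota (x i)

/-- The code `(1+2v²)C₁ ⊕ (2v+2v²)C₂ ⊕ (v+2v²)C₃ ⊆ R^n` built from three
ternary codes `C₁, C₂, C₃ ⊆ Z₃^n`. -/
def tri {n : ℕ} (C₁ C₂ C₃ : Set (Fin n → ZMod 3)) : Set (Fin n → R3) :=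
  {w | ∃ x ∈ C₁, ∃ y ∈ C₂, ∃ z ∈ C₃, w = e1 • emb x + e2 • emb y + e3 • emb z}

open Polynomial in
/-- The polynomial representation `(c₀,…,c_{n-1}) ↦ c₀ + c₁x + … + c_{n-1}x^{n-1}`
of a vector over `Z₃`. -/
noncomputable def toPolyZ {n : ℕ} (c : Fin n → ZMod 3) : Polynomial (ZMod 3) :=
  ∑ i : Fin n, Polynomial.C (c i) * Polynomial.X ^ (i : ℕ)

open Polynomial in
/-- The polynomial representation of a vector over `R`. -/
noncomputable def toPolyR {n : ℕ} (c : Fin n → R3) : Polynomial R3 :=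
  ∑ i : Fin n, Polynomial.C (c i) * Polynomial.X ^ (i : ℕ)

/-- The quotient map `Z₃[x] → Z₃[x]/(xⁿ - ε)`. -/
noncomputable def mkZ (n : ℕ) (ε : ZMod 3) :
    Polynomial (ZMod 3) →+*
      Polynomial (ZMod 3) ⧸ Ideal.span {Polynomial.X ^ n - Polynomial.C ε} :=
  Ideal.Quotient.mk _

/-- The quotient map `R[x] → R[x]/(xⁿ - ε)`. -/
noncomputable def mkR (n : ℕ) (ε : R3) :
    Polynomial R3 →+* Polynomial R3 ⧸ Ideal.span {Polynomial.X ^ n - Polynomial.C ε} :=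
  Ideal.Quotient.mk _

/-- `f` is the generator polynomial of the ternary cyclic (`ε = 1`) resp. negacyclic
(`ε = -1`) code `D` of length `n`: `f` is a monic divisor of `xⁿ - ε` and, under the
polynomial representation, `D` corresponds exactly to the ideal of `Z₃[x]/(xⁿ - ε)`
generated by `f`. -/
def IsGenPolyZ (n : ℕ) (ε : ZMod 3) (D : Set (Fin n → ZMod 3))
    (f : Polynomial (ZMod 3)) : Prop :=
  f.Monic ∧ f ∣ (Polynomial.X ^ n - Polynomial.C ε) ∧
    {p | ∃ c ∈ D, p = mkZ n ε (toPolyZ c)} = ↑(Ideal.span {mkZ n ε f})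

namespace St10
open Polynomial

variable {n : ℕ}

lemma coeff_sum_fin {S : Type*} [Semiring S] (c : Fin n → S) (j : ℕ) :
    (∑ i : Fin n, C (c i) * X ^ (i : ℕ)).coeff j = if h : j < n then c ⟨j, h⟩ else 0 := by
  classical
  simp only [finset_sum_coeff, coeff_C_mul, coeff_X_pow, mul_ite, mul_one, mul_zero]
  by_cases h : j < n
  · rw [dif_pos h, Finset.sum_eq_single (⟨j, h⟩ : Fin n)]
    · simp
    · intro b _ hb
      rw [if_neg]
      intro hjb
      exact hb (Fin.ext hjb.symm)
    · simp
  · rw [dif_neg h, Finset.sum_eq_zero]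
    intro b _
    rw [if_neg]
    intro hjb
    exact h (hjb ▸ b.isLt)

lemma toPolyZ_coeff (c : Fin n → ZMod 3) (j : ℕ) :
    (toPolyZ c).coeff j = if h : j < n then c ⟨j, h⟩ else 0 := coeff_sum_fin c j

lemma toPolyR_coeff (c : Fin n → R3) (j : ℕ) :
    (toPolyR c).coeff j = if h : j < n then c ⟨j, h⟩ else 0 := coeff_sum_fin c j

lemma degree_sum_fin_lt {S : Type*} [Semiring S] (c : Fin n → S) :
    (∑ i : Fin n, C (c i) * X ^ (i : ℕ)).degree < (n : WithBot ℕ) := by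
  rcases Nat.eq_zero_or_pos n with h | h
  · subst h
    simp only [Finset.univ_eq_empty, Finset.sum_empty, degree_zero, Nat.cast_zero]
    exact WithBot.bot_lt_coe 0
  · rw [degree_lt_iff_coeff_zero]
    intro m hm
    rw [coeff_sum_fin, dif_neg]
    exact fun hmn => absurd hm (by exact_mod_cast Nat.not_le_of_lt hmn)

lemma toPolyZ_degree_lt (c : Fin n → ZMod 3) : (toPolyZ c).degree < (n : WithBot ℕ) :=
  degree_sum_fin_lt c

end St10
namespace St10
open Polynomial

variable {n : ℕ}

lemma dvd_of_mkZ_eq {ε : ZMod 3} {p q : Polynomial (ZMod 3)} (h : mkZ n ε p = mkZ n ε q) :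
    (X ^ n - C ε) ∣ (p - q) := by
  rw [← Ideal.mem_span_singleton]
  exact Ideal.Quotient.eq.1 h

lemma mkZ_inj [NeZero n] {p q : Polynomial (ZMod 3)}
    (hp : p.degree < (n : WithBot ℕ)) (hq : q.degree < (n : WithBot ℕ))
    (h : mkZ n 1 p = mkZ n 1 q) : p = q := by
  have hd := dvd_of_mkZ_eq h
  have hdeg : (X ^ n - C (1 : ZMod 3)).degree = (n : WithBot ℕ) :=
    degree_X_pow_sub_C (Nat.pos_of_ne_zero (NeZero.ne n)) 1
  have h0 : p - q = 0 := by
    refine Polynomial.eq_zero_of_dvd_of_degree_lt hd ?_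
    rw [hdeg]
    exact lt_of_le_of_lt (degree_sub_le p q) (max_lt hp hq)
  exact sub_eq_zero.mp h0

lemma mkZ_toPolyZ_inj [NeZero n] {c d : Fin n → ZMod 3}
    (h : mkZ n 1 (toPolyZ c) = mkZ n 1 (toPolyZ d)) : c = d := by
  have := mkZ_inj (toPolyZ_degree_lt c) (toPolyZ_degree_lt d) h
  funext i
  have h1 := toPolyZ_coeff c (i : ℕ)
  rw [this, toPolyZ_coeff d (i : ℕ)] at h1
  simpa [i.isLt] using h1.symm

end St10
namespace St10
open Polynomial

variable {n : ℕ}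

lemma toPolyR_add (c d : Fin n → R3) : toPolyR (c + d) = toPolyR c + toPolyR d := by
  simp [toPolyR, Finset.sum_add_distrib, add_mul, Pi.add_apply, map_add]

lemma toPolyR_smul (r : R3) (c : Fin n → R3) : toPolyR (r • c) = C r * toPolyR c := by
  simp [toPolyR, Finset.mul_sum, Pi.smul_apply, smul_eq_mul, map_mul, mul_assoc]

lemma toPolyR_emb (x : Fin n → ZMod 3) : toPolyR (emb x) = (toPolyZ x).map R3.iota := by
  simp [toPolyR, toPolyZ, emb, Polynomial.map_sum]

lemma toPolyZ_zero : toPolyZ (0 : Fin n → ZMod 3) = 0 := by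
  simp [toPolyZ]

lemma cyc_poly {m : ℕ} (c : Fin (m+1) → R3) :
    X * toPolyR c - toPolyR (cyc c) = C (c (Fin.last m)) * (X ^ (m+1) - C 1) := by
  have h1 : toPolyR (cyc c) = ∑ j : Fin (m+1), C (c j) * X ^ ((j + 1 : Fin (m+1)) : ℕ) := by
    rw [toPolyR]
    rw [← Equiv.sum_comp (Equiv.addRight (1 : Fin (m+1)))
      (fun i => C (cyc c i) * X ^ (i : ℕ))]
    refine Finset.sum_congr rfl (fun j _ => ?_)
    simp [cyc, Equiv.addRight]
  have h2 : X * toPolyR c = ∑ j : Fin (m+1), C (c j) * X ^ ((j : ℕ) + 1) := by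
    rw [toPolyR, Finset.mul_sum]
    refine Finset.sum_congr rfl (fun j _ => ?_)
    ring
  rw [h1, h2, ← Finset.sum_sub_distrib]
  rw [Finset.sum_eq_single (Fin.last m)]
  · rw [Fin.val_add_one, if_pos rfl, Fin.val_last, pow_zero, mul_sub, mul_one]
    rw [map_one]
    ring
  · intro j _ hj
    rw [Fin.val_add_one, if_neg hj, sub_self]
  · simp

lemma mkR_cyc [NeZero n] (c : Fin n → R3) :
    mkR n 1 (toPolyR (cyc c)) = mkR n 1 (X * toPolyR c) := by
  obtain ⟨m, rfl⟩ := Nat.exists_eq_succ_of_ne_zero (NeZero.ne n)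
  refine (Ideal.Quotient.eq).2 ?_
  have := cyc_poly c
  have h : toPolyR (cyc c) - X * toPolyR c = (-C (c (Fin.last m))) * (X ^ (m+1) - C 1) := by
    rw [neg_mul, ← this]; ring
  rw [h]
  exact Ideal.mul_mem_left _ _ (Ideal.subset_span rfl)

end St10
namespace St10
open Polynomial

variable {n : ℕ}

lemma mul_mem_aux [NeZero n] (C : Submodule R3 (Fin n → R3))
    (hCyc : ∀ c ∈ C, cyc c ∈ C) (q : Polynomial R3) :
    ∀ c ∈ C, ∃ c' ∈ C, mkR n 1 (q * toPolyR c) = mkR n 1 (toPolyR c') := by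
  induction q using Polynomial.induction_on with
  | C a =>
    intro c hc
    exact ⟨a • c, C.smul_mem a hc, by rw [toPolyR_smul]⟩
  | add p q hp hq =>
    intro c hc
    obtain ⟨c1, hc1, e1⟩ := hp c hc
    obtain ⟨c2, hc2, e2⟩ := hq c hc
    refine ⟨c1 + c2, C.add_mem hc1 hc2, ?_⟩
    rw [add_mul, map_add, e1, e2, toPolyR_add, map_add]
  | monomial k a ih =>
    intro c hc
    obtain ⟨c', hc', e⟩ := ih c hc
    refine ⟨cyc c', hCyc c' hc', ?_⟩
    have h : Polynomial.C a * X ^ (k+1) * toPolyR c = X * (Polynomial.C a * X^k * toPolyR c) := by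
      ring
    rw [h, map_mul, e, ← map_mul, ← mkR_cyc]

/-- If `x`'s class lies in the ideal generated by `mkZ f`, then for any `e : R3`,
`mkR (C e * map (toPolyZ x))` lies in the span of `mkR (C e * map f)`. -/
lemma mkR_e_mem_span [NeZero n] (f : Polynomial (ZMod 3)) (x : Fin n → ZMod 3)
    (hx : mkZ n 1 (toPolyZ x) ∈ Ideal.span {mkZ n 1 f}) (e : R3) :
    mkR n 1 (Polynomial.C e * (toPolyZ x).map R3.iota) ∈
      Ideal.span {mkR n 1 (Polynomial.C e * f.map R3.iota)} := by
  obtain ⟨a, ha⟩ := Ideal.mem_span_singleton'.1 hx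
  obtain ⟨q, rfl⟩ := Ideal.Quotient.mk_surjective a
  have ha' : mkZ n 1 (q * f) = mkZ n 1 (toPolyZ x) := by
    rw [map_mul]; exact ha
  obtain ⟨s, hs⟩ := dvd_of_mkZ_eq ha'
  have hmap : (toPolyZ x).map R3.iota =
      (f.map R3.iota) * (q.map R3.iota) - (X ^ n - Polynomial.C 1) * (s.map R3.iota) := by
    have : toPolyZ x = q * f - (X ^ n - Polynomial.C 1) * s := by
      rw [← hs]; ring
    rw [this]
    simp [Polynomial.map_sub, Polynomial.map_mul, Polynomial.map_pow, mul_comm]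
  rw [Ideal.mem_span_singleton']
  refine ⟨mkR n 1 (q.map R3.iota), ?_⟩
  rw [← map_mul, hmap]
  have hzero : mkR n 1 ((X ^ n - Polynomial.C (1 : R3)) * (Polynomial.C e * (s.map R3.iota))) = 0 := by
    show Ideal.Quotient.mk _ _ = 0
    rw [Ideal.Quotient.eq_zero_iff_mem]
    exact Ideal.mul_mem_right _ _ (Ideal.subset_span rfl)
  have : Polynomial.C e * (f.map R3.iota * q.map R3.iota - (X ^ n - Polynomial.C 1) * s.map R3.iota)
      = q.map R3.iota * (Polynomial.C e * f.map R3.iota)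
        - (X ^ n - Polynomial.C 1) * (Polynomial.C e * s.map R3.iota) := by ring
  rw [this, map_sub, hzero, sub_zero, map_mul]

end St10
namespace St10
open Polynomial

variable {n : ℕ}

lemma card_code [NeZero n] (D : Submodule (ZMod 3) (Fin n → ZMod 3)) (f : Polynomial (ZMod 3))
    (h : IsGenPolyZ n 1 (D : Set (Fin n → ZMod 3)) f) :
    f.natDegree ≤ n ∧ Nat.card D = 3 ^ (n - f.natDegree) := by
  obtain ⟨hm, hdvd, hset⟩ := h
  have hn : 0 < n := Nat.pos_of_ne_zero (NeZero.ne n)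
  obtain ⟨g, hg⟩ := hdvd
  have hmonX : (X ^ n - C (1 : ZMod 3)).Monic := monic_X_pow_sub_C 1 (NeZero.ne n)
  have hgm : g.Monic := hm.of_mul_monic_left (hg ▸ hmonX)
  have hXdeg : (X ^ n - C (1 : ZMod 3)).natDegree = n :=
    natDegree_eq_of_degree_eq_some (degree_X_pow_sub_C hn 1)
  have hsum : f.natDegree + g.natDegree = n := by
    rw [← hm.natDegree_mul hgm, ← hg, hXdeg]
  have hle : f.natDegree ≤ n := by omega
  refine ⟨hle, ?_⟩
  have hgdeg : g.degree = ((n - f.natDegree : ℕ) : WithBot ℕ) := by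
    rw [degree_eq_natDegree hgm.ne_zero]
    congr 1
    omega
  -- Step 1: card D = card of the image set
  have himg : {p | ∃ c ∈ (D : Set (Fin n → ZMod 3)), p = mkZ n 1 (toPolyZ c)} =
      (fun c => mkZ n 1 (toPolyZ c)) '' (D : Set (Fin n → ZMod 3)) := by
    ext p
    simp only [Set.mem_image, Set.mem_setOf_eq]
    constructor
    · rintro ⟨c, hc, rfl⟩; exact ⟨c, hc, rfl⟩
    · rintro ⟨c, hc, rfl⟩; exact ⟨c, hc, rfl⟩
  have hinj : Function.Injective (fun c : Fin n → ZMod 3 => mkZ n 1 (toPolyZ c)) :=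
    fun c d h => mkZ_toPolyZ_inj h
  have hcard1 : Nat.card D = ((fun c => mkZ n 1 (toPolyZ c)) ''
      (D : Set (Fin n → ZMod 3))).ncard := by
    rw [Set.ncard_image_of_injOn (hinj.injOn)]
    rw [← Nat.card_coe_set_eq]
    rfl
  -- Step 2: the ideal as an image of degreeLT
  have hspan : (Ideal.span {mkZ n 1 f} : Set _) =
      (fun q => mkZ n 1 (f * q)) '' (degreeLT (ZMod 3) (n - f.natDegree) : Set _) := by
    ext p
    simp only [Set.mem_image, SetLike.mem_coe, Ideal.mem_span_singleton', SetLike.mem_coe]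
    constructor
    · rintro ⟨a, rfl⟩
      obtain ⟨t, rfl⟩ := Ideal.Quotient.mk_surjective a
      refine ⟨t %ₘ g, ?_, ?_⟩
      · exact mem_degreeLT.2 (hgdeg ▸ degree_modByMonic_lt t hgm)
      · have hsub : g * (t /ₘ g) = t - t %ₘ g :=
          eq_sub_of_add_eq (by rw [add_comm]; exact modByMonic_add_div t g)
        show mkZ n 1 (f * (t %ₘ g)) = mkZ n 1 t * mkZ n 1 f
        rw [← map_mul]
        refine (Ideal.Quotient.eq).2 ?_
        have hkey : f * (t %ₘ g) - t * f = (X ^ n - C 1) * (-(t /ₘ g)) := by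
          calc f * (t %ₘ g) - t * f = -(f * (t - t %ₘ g)) := by ring
          _ = -(f * (g * (t /ₘ g))) := by rw [hsub]
          _ = (X ^ n - C 1) * (-(t /ₘ g)) := by rw [hg]; ring
        rw [hkey]
        exact Ideal.mul_mem_right _ _ (Ideal.subset_span rfl)
    · rintro ⟨q, _, rfl⟩
      exact ⟨mkZ n 1 q, by rw [← map_mul, mul_comm]⟩
  -- Step 3: injectivity on degreeLT
  have hinjOn : Set.InjOn (fun q => mkZ n 1 (f * q))
      (degreeLT (ZMod 3) (n - f.natDegree) : Set _) := by
    intro q1 hq1 q2 hq2 hq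
    obtain ⟨s, hs⟩ := dvd_of_mkZ_eq hq
    have hfg : f * g ∣ f * (q1 - q2) := ⟨s, by rw [← hg, ← hs]; ring⟩
    have hgdvd : g ∣ q1 - q2 := (mul_dvd_mul_iff_left hm.ne_zero).1 hfg
    have h0 : q1 - q2 = 0 := by
      refine Polynomial.eq_zero_of_dvd_of_degree_lt hgdvd ?_
      rw [hgdeg]
      simp only [SetLike.mem_coe, mem_degreeLT] at hq1 hq2
      exact lt_of_le_of_lt (degree_sub_le q1 q2) (max_lt hq1 hq2)
    exact sub_eq_zero.mp h0
  -- Step 4: put together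
  rw [hcard1, ← himg, hset, hspan, Set.ncard_image_of_injOn hinjOn]
  have hfin : (↑(degreeLT (ZMod 3) (n - f.natDegree)) : Set (Polynomial (ZMod 3))).ncard
      = Nat.card (Fin (n - f.natDegree) → ZMod 3) := by
    rw [← Nat.card_coe_set_eq]
    exact Nat.card_congr (degreeLTEquiv (ZMod 3) (n - f.natDegree)).toEquiv
  rw [hfin]
  simp [Nat.card_eq_fintype_card]
end St10
namespace St10
open Polynomial

variable {n : ℕ}

lemma e1_eq : e1 = ⟨1, 0, 2⟩ := by
  have h2 : (2 : R3) = 1 + 1 := one_add_one_eq_two.symm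
  ext <;> simp [e1, R3.v, pow_two, h2] <;> decide

lemma e2_eq : e2 = ⟨0, 2, 2⟩ := by
  have h2 : (2 : R3) = 1 + 1 := one_add_one_eq_two.symm
  ext <;> simp [e2, R3.v, pow_two, h2] <;> decide

lemma e3_eq : e3 = ⟨0, 1, 2⟩ := by
  have h2 : (2 : R3) = 1 + 1 := one_add_one_eq_two.symm
  ext <;> simp [e3, R3.v, pow_two, h2] <;> decide

lemma recov (x y z : ZMod 3) :
    (e1 * R3.iota x + e2 * R3.iota y + e3 * R3.iota z).a = x ∧
    ((e1 * R3.iota x + e2 * R3.iota y + e3 * R3.iota z).a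
      + (e1 * R3.iota x + e2 * R3.iota y + e3 * R3.iota z).b
      + (e1 * R3.iota x + e2 * R3.iota y + e3 * R3.iota z).c) = y ∧
    ((e1 * R3.iota x + e2 * R3.iota y + e3 * R3.iota z).a
      + 2 * (e1 * R3.iota x + e2 * R3.iota y + e3 * R3.iota z).b
      + (e1 * R3.iota x + e2 * R3.iota y + e3 * R3.iota z).c) = z := by
  rw [e1_eq, e2_eq, e3_eq]
  simp only [R3.iota, RingHom.coe_mk, MonoidHom.coe_mk, OneHom.coe_mk,
    R3.mul_a, R3.mul_b, R3.mul_c, R3.add_a, R3.add_b, R3.add_c]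
  have h3 : (3 : ZMod 3) = 0 := by decide
  have h4 : (4 : ZMod 3) = 1 := by decide
  have h6 : (6 : ZMod 3) = 0 := by decide
  refine ⟨?_, ?_, ?_⟩ <;> ring_nf <;> simp [h3, h4, h6]

noncomputable def triMap (p : (Fin n → ZMod 3) × (Fin n → ZMod 3) × (Fin n → ZMod 3)) : Fin n → R3 :=
  e1 • emb p.1 + e2 • emb p.2.1 + e3 • emb p.2.2

lemma triMap_apply (p : (Fin n → ZMod 3) × (Fin n → ZMod 3) × (Fin n → ZMod 3)) (i : Fin n) :
    triMap p i = e1 * R3.iota (p.1 i) + e2 * R3.iota (p.2.1 i) + e3 * R3.iota (p.2.2 i) := rfl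

lemma triMap_inj : Function.Injective (triMap (n := n)) := by
  intro p q h
  have h' : ∀ i, triMap p i = triMap q i := fun i => congrFun h i
  have key : ∀ i, p.1 i = q.1 i ∧ p.2.1 i = q.2.1 i ∧ p.2.2 i = q.2.2 i := by
    intro i
    have hi := h' i
    rw [triMap_apply, triMap_apply] at hi
    obtain ⟨a1, b1, c1⟩ := recov (p.1 i) (p.2.1 i) (p.2.2 i)
    obtain ⟨a2, b2, c2⟩ := recov (q.1 i) (q.2.1 i) (q.2.2 i)
    rw [hi] at a1 b1 c1
    exact ⟨a1.symm.trans a2, b1.symm.trans b2, c1.symm.trans c2⟩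
  refine Prod.ext (funext fun i => (key i).1) (Prod.ext (funext fun i => (key i).2.1)
    (funext fun i => (key i).2.2))

lemma tri_eq_image (C₁ C₂ C₃ : Set (Fin n → ZMod 3)) :
    tri C₁ C₂ C₃ = triMap '' (C₁ ×ˢ C₂ ×ˢ C₃) := by
  ext w
  simp only [tri, Set.mem_image, Set.mem_prod, Set.mem_setOf_eq]
  constructor
  · rintro ⟨x, hx, y, hy, z, hz, rfl⟩
    exact ⟨(x, y, z), ⟨hx, hy, hz⟩, rfl⟩
  · rintro ⟨⟨x, y, z⟩, ⟨hx, hy, hz⟩, rfl⟩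
    exact ⟨x, hx, y, hy, z, hz, rfl⟩

lemma emb_zero : emb (0 : Fin n → ZMod 3) = 0 := by
  funext i; simp [emb]

end St10
namespace St10
open Polynomial

variable {n : ℕ}

lemma mkR_congr_of_mkZ_eq [NeZero n] {p q : Polynomial (ZMod 3)}
    (h : mkZ n 1 p = mkZ n 1 q) (e : R3) :
    mkR n 1 (Polynomial.C e * p.map R3.iota) = mkR n 1 (Polynomial.C e * q.map R3.iota) := by
  obtain ⟨s, hs⟩ := dvd_of_mkZ_eq h
  refine (Ideal.Quotient.eq).2 ?_
  have hmap : p.map R3.iota - q.map R3.iota = (X ^ n - Polynomial.C 1) * s.map R3.iota := by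
    rw [← Polynomial.map_sub, hs]
    simp [Polynomial.map_mul, Polynomial.map_sub, Polynomial.map_pow]
  have key : Polynomial.C e * p.map R3.iota - Polynomial.C e * q.map R3.iota
      = (X ^ n - Polynomial.C 1) * (Polynomial.C e * s.map R3.iota) := by
    calc Polynomial.C e * p.map R3.iota - Polynomial.C e * q.map R3.iota
        = Polynomial.C e * (p.map R3.iota - q.map R3.iota) := by ring
    _ = _ := by rw [hmap]; ring
  rw [key]
  exact Ideal.mul_mem_right _ _ (Ideal.subset_span rfl)

end St10

open St10

/-- Suppose `C = (1+2v²)C₁ ⊕ (2v+2v²)C₂ ⊕ (v+2v²)C₃` is a cyclic code of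
length `n` over `R`, where the ternary cyclic codes `C₁, C₂, C₃` have generator
polynomials `f₁, f₂, f₃` (monic divisors of `xⁿ - 1` over `Z₃`). Then, under the
polynomial representation `R^n ≅ R[x]/(xⁿ-1)`, `C` is the ideal generated by
`(1+2v²)f₁`, `(2v+2v²)f₂`, `(v+2v²)f₃`, and `|C| = 3^{3n - (deg f₁ + deg f₂ + deg f₃)}`. -/
theorem statement10 (n : ℕ) [NeZero n] (C : Submodule R3 (Fin n → R3))
    (C₁ C₂ C₃ : Submodule (ZMod 3) (Fin n → ZMod 3))
    (f₁ f₂ f₃ : Polynomial (ZMod 3))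
    (h₁ : IsGenPolyZ n 1 (C₁ : Set (Fin n → ZMod 3)) f₁)
    (h₂ : IsGenPolyZ n 1 (C₂ : Set (Fin n → ZMod 3)) f₂)
    (h₃ : IsGenPolyZ n 1 (C₃ : Set (Fin n → ZMod 3)) f₃)
    (hC : (C : Set (Fin n → R3)) = tri (C₁ : Set (Fin n → ZMod 3)) C₂ C₃)
    (hCyc : cyc '' (C : Set (Fin n → R3)) = (C : Set (Fin n → R3))) :
    {p | ∃ c ∈ C, p = mkR n 1 (toPolyR c)} =
      ↑(Ideal.span
        {mkR n 1 (Polynomial.C e1 * f₁.map R3.iota),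
         mkR n 1 (Polynomial.C e2 * f₂.map R3.iota),
         mkR n 1 (Polynomial.C e3 * f₃.map R3.iota)}) ∧
    Nat.card C = 3 ^ (3 * n - (f₁.natDegree + f₂.natDegree + f₃.natDegree)) := by
  classical
  have hCyc' : ∀ c ∈ C, cyc c ∈ C := by
    intro c hc
    have : cyc c ∈ cyc '' (C : Set (Fin n → R3)) := ⟨c, hc, rfl⟩
    rw [hCyc] at this
    exact this
  set g1 := mkR n 1 (Polynomial.C e1 * f₁.map R3.iota) with hg1
  set g2 := mkR n 1 (Polynomial.C e2 * f₂.map R3.iota) with hg2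
  set g3 := mkR n 1 (Polynomial.C e3 * f₃.map R3.iota) with hg3
  constructor
  · -- the ideal equality
    -- the image set is an ideal
    set S : Set (Polynomial R3 ⧸ Ideal.span {Polynomial.X ^ n - Polynomial.C (1 : R3)}) :=
      {p | ∃ c ∈ C, p = mkR n 1 (toPolyR c)} with hS
    have hIadd : ∀ p ∈ S, ∀ q ∈ S, p + q ∈ S := by
      rintro p ⟨c, hc, rfl⟩ q ⟨d, hd, rfl⟩
      exact ⟨c + d, C.add_mem hc hd, by rw [toPolyR_add, map_add]⟩
    let I : Ideal (Polynomial R3 ⧸ Ideal.span {Polynomial.X ^ n - Polynomial.C (1 : R3)}) :=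
      { carrier := S
        add_mem' := fun hp hq => hIadd _ hp _ hq
        zero_mem' := ⟨0, C.zero_mem, by simp [toPolyR]⟩
        smul_mem' := by
          intro r p hp
          obtain ⟨q, rfl⟩ := Ideal.Quotient.mk_surjective r
          obtain ⟨c, hc, rfl⟩ := hp
          obtain ⟨c', hc', hc'eq⟩ := mul_mem_aux C hCyc' q c hc
          refine ⟨c', hc', ?_⟩
          rw [smul_eq_mul]
          show mkR n 1 q * mkR n 1 (toPolyR c) = mkR n 1 (toPolyR c')
          rw [← map_mul, hc'eq] }
    apply Set.Subset.antisymm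
    · -- image ⊆ span
      rintro p ⟨c, hc, rfl⟩
      have hc' : c ∈ tri (C₁ : Set (Fin n → ZMod 3)) C₂ C₃ := by rw [← hC]; exact hc
      obtain ⟨x, hx, y, hy, z, hz, rfl⟩ := hc'
      rw [toPolyR_add, toPolyR_add, toPolyR_smul, toPolyR_smul, toPolyR_smul,
        toPolyR_emb, toPolyR_emb, toPolyR_emb, map_add, map_add]
      have hx' : mkZ n 1 (toPolyZ x) ∈ Ideal.span {mkZ n 1 f₁} := by
        have : mkZ n 1 (toPolyZ x) ∈ {p | ∃ c ∈ (C₁ : Set (Fin n → ZMod 3)),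
            p = mkZ n 1 (toPolyZ c)} := ⟨x, hx, rfl⟩
        rw [h₁.2.2] at this
        exact this
      have hy' : mkZ n 1 (toPolyZ y) ∈ Ideal.span {mkZ n 1 f₂} := by
        have : mkZ n 1 (toPolyZ y) ∈ {p | ∃ c ∈ (C₂ : Set (Fin n → ZMod 3)),
            p = mkZ n 1 (toPolyZ c)} := ⟨y, hy, rfl⟩
        rw [h₂.2.2] at this
        exact this
      have hz' : mkZ n 1 (toPolyZ z) ∈ Ideal.span {mkZ n 1 f₃} := by
        have : mkZ n 1 (toPolyZ z) ∈ {p | ∃ c ∈ (C₃ : Set (Fin n → ZMod 3)),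
            p = mkZ n 1 (toPolyZ c)} := ⟨z, hz, rfl⟩
        rw [h₃.2.2] at this
        exact this
      have sub1 : Ideal.span {g1} ≤ Ideal.span {g1, g2, g3} :=
        Ideal.span_mono (Set.singleton_subset_iff.2 (Set.mem_insert _ _))
      have sub2 : Ideal.span {g2} ≤ Ideal.span {g1, g2, g3} :=
        Ideal.span_mono (Set.singleton_subset_iff.2
          (Set.mem_insert_iff.2 (Or.inr (Set.mem_insert _ _))))
      have sub3 : Ideal.span {g3} ≤ Ideal.span {g1, g2, g3} :=
        Ideal.span_mono (Set.singleton_subset_iff.2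
          (Set.mem_insert_iff.2 (Or.inr (Set.mem_insert_iff.2 (Or.inr rfl)))))
      have m1 := sub1 (mkR_e_mem_span f₁ x hx' e1)
      have m2 := sub2 (mkR_e_mem_span f₂ y hy' e2)
      have m3 := sub3 (mkR_e_mem_span f₃ z hz' e3)
      exact Ideal.add_mem _ (Ideal.add_mem _ m1 m2) m3
    · -- span ⊆ image
      have hgen : ∀ (f : Polynomial (ZMod 3)) (e : R3)
          (D : Submodule (ZMod 3) (Fin n → ZMod 3)),
          IsGenPolyZ n 1 (D : Set (Fin n → ZMod 3)) f →
          (∀ x ∈ D, e • emb x + (0 : Fin n → R3) ∈ C) →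
          mkR n 1 (Polynomial.C e * f.map R3.iota) ∈ S := by
        intro f e D hD hmem
        have : mkZ n 1 f ∈ {p | ∃ c ∈ (D : Set (Fin n → ZMod 3)),
            p = mkZ n 1 (toPolyZ c)} := by
          rw [hD.2.2]
          exact Ideal.subset_span rfl
        obtain ⟨x, hx, hxeq⟩ := this
        refine ⟨e • emb x + 0, hmem x hx, ?_⟩
        rw [add_zero, toPolyR_smul, toPolyR_emb]
        exact mkR_congr_of_mkZ_eq hxeq e
      have hsub : ({g1, g2, g3} :
          Set (Polynomial R3 ⧸ Ideal.span {Polynomial.X ^ n - Polynomial.C (1 : R3)})) ⊆ S := by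
        rintro p (rfl | rfl | rfl)
        · refine hgen f₁ e1 C₁ h₁ (fun x hx => ?_)
          have hm : e1 • emb x + 0 ∈ tri (C₁ : Set (Fin n → ZMod 3)) C₂ C₃ :=
            ⟨x, hx, 0, C₂.zero_mem, 0, C₃.zero_mem, by rw [emb_zero]; simp⟩
          rw [← hC] at hm
          exact hm
        · refine hgen f₂ e2 C₂ h₂ (fun y hy => ?_)
          have hm : e2 • emb y + 0 ∈ tri (C₁ : Set (Fin n → ZMod 3)) C₂ C₃ :=
            ⟨0, C₁.zero_mem, y, hy, 0, C₃.zero_mem, by rw [emb_zero]; simp⟩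
          rw [← hC] at hm
          exact hm
        · refine hgen f₃ e3 C₃ h₃ (fun z hz => ?_)
          have hm : e3 • emb z + 0 ∈ tri (C₁ : Set (Fin n → ZMod 3)) C₂ C₃ :=
            ⟨0, C₁.zero_mem, 0, C₂.zero_mem, z, hz, by rw [emb_zero]; simp⟩
          rw [← hC] at hm
          exact hm
      exact fun p hp => (Ideal.span_le.2 hsub : Ideal.span {g1, g2, g3} ≤ I) hp
  · -- the cardinality
    obtain ⟨hle1, hc1⟩ := card_code C₁ f₁ h₁
    obtain ⟨hle2, hc2⟩ := card_code C₂ f₂ h₂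
    obtain ⟨hle3, hc3⟩ := card_code C₃ f₃ h₃
    set A₁ : Set (Fin n → ZMod 3) := ↑C₁ with hA₁
    set A₂ : Set (Fin n → ZMod 3) := ↑C₂ with hA₂
    set A₃ : Set (Fin n → ZMod 3) := ↑C₃ with hA₃
    have hprod : Nat.card C = Nat.card C₁ * (Nat.card C₂ * Nat.card C₃) := by
      have h1 : (C : Set (Fin n → R3)) = triMap '' (A₁ ×ˢ A₂ ×ˢ A₃) := by
        rw [hC, tri_eq_image]
      calc Nat.card C = ((C : Set (Fin n → R3))).ncard := by
            exact Nat.card_coe_set_eq _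
      _ = (triMap '' (A₁ ×ˢ A₂ ×ˢ A₃)).ncard := by rw [h1]
      _ = (A₁ ×ˢ A₂ ×ˢ A₃).ncard := Set.ncard_image_of_injOn triMap_inj.injOn
      _ = Nat.card (↥(A₁ ×ˢ A₂ ×ˢ A₃)) := (Nat.card_coe_set_eq _).symm
      _ = Nat.card (↥A₁) * (Nat.card (↥A₂) * Nat.card (↥A₃)) := by
          rw [Nat.card_congr (Equiv.Set.prod A₁ (A₂ ×ˢ A₃)), Nat.card_prod,
            Nat.card_congr (Equiv.Set.prod A₂ A₃), Nat.card_prod]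
      _ = Nat.card C₁ * (Nat.card C₂ * Nat.card C₃) := rfl
    rw [hprod, hc1, hc2, hc3, ← pow_add, ← pow_add]
    congr 1
    omega
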